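/- Let R be a (not necessarily commutative) ring and let E, P, G, S, S' ∈ R satisfy E·P = 1 + S and P·E = 1 + S'. In R[[t]], define Q := Σ_{n=0}^∞ (−1)^n · ((P·G)^n · P) · t^n. Then Q is the unique power series satisfying Q = C(P) − C(P·G)·t·Q, and it satisfies the two identities (C(E) + C(G)·t) · Q = 1 + C(S) · (1 − C(G)·t·Q) and Q · (C(E) + C(G)·t) = 1 + (1 − Q·C(G)·t) · C(S'). -/

import Mathlib

open PowerSeries

/-- The formal power series `Q = Σ_n (−1)^n ((P·G)^n·P) t^n`. -/
noncomputable def Qser {R : Type*} [Ring R] (P G : R) : PowerSeries R :=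
  PowerSeries.mk fun n => (-1) ^ n * ((P * G) ^ n * P)

private lemma Qser_eq1 {R : Type*} [Ring R] (P G : R) :
    Qser P G = PowerSeries.C P - PowerSeries.C (P * G) * PowerSeries.X * Qser P G := by
  ext n
  cases n with
  | zero =>
    simp [Qser, mul_assoc, coeff_C_mul, coeff_zero_X_mul]
  | succ n =>
    simp only [Qser, coeff_mk, map_sub, coeff_C, Nat.succ_ne_zero, if_false,
      mul_assoc, coeff_C_mul, coeff_succ_X_mul, zero_sub]
    rcases Nat.even_or_odd n with he | ho
    · rw [he.neg_one_pow, he.add_one.neg_one_pow, pow_succ']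
      noncomm_ring
    · rw [ho.neg_one_pow, ho.add_one.neg_one_pow, pow_succ']
      noncomm_ring

private lemma pow_shift {R : Type*} [Ring R] (P G : R) (n : ℕ) :
    (P * G) ^ n * P = P * (G * P) ^ n := by
  induction n with
  | zero => simp
  | succ n ih =>
    rw [pow_succ', mul_assoc, ih, pow_succ', ← mul_assoc, ← mul_assoc, ← mul_assoc]

private lemma Qser_eq2 {R : Type*} [Ring R] (P G : R) :
    Qser P G = PowerSeries.C P - Qser P G * PowerSeries.C (G * P) * PowerSeries.X := by
  ext n
  cases n with
  | zero =>
    simp [Qser, coeff_zero_mul_X]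
  | succ n =>
    simp only [Qser, coeff_mk, map_sub, coeff_C, Nat.succ_ne_zero, if_false,
      coeff_succ_mul_X, coeff_mul_C, zero_sub]
    rw [pow_shift, pow_shift, pow_succ]
    rcases Nat.even_or_odd n with he | ho
    · rw [he.neg_one_pow, pow_succ]
      noncomm_ring
    · rw [ho.neg_one_pow, pow_succ]
      noncomm_ring

theorem Qser_spec {R : Type*} [Ring R] (E P G S S' : R)
    (h1 : E * P = 1 + S) (h2 : P * E = 1 + S') :
    (∀ Q' : PowerSeries R,
        Q' = PowerSeries.C P - PowerSeries.C (P * G) * PowerSeries.X * Q' ↔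
          Q' = Qser P G) ∧
    (PowerSeries.C E + PowerSeries.C G * PowerSeries.X) * Qser P G =
        1 + PowerSeries.C S *
          (1 - PowerSeries.C G * PowerSeries.X * Qser P G) ∧
    Qser P G * (PowerSeries.C E + PowerSeries.C G * PowerSeries.X) =
        1 + (1 - Qser P G * PowerSeries.C G * PowerSeries.X) * PowerSeries.C S' := by
  have hx : ∀ a : R, PowerSeries.X * PowerSeries.C a = PowerSeries.C a * PowerSeries.X :=
    fun a => ((commute_X (PowerSeries.C a)).eq).symm
  refine ⟨fun Q' => ⟨fun h => ?_, fun h => h ▸ Qser_eq1 P G⟩, ?_, ?_⟩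
  · -- uniqueness
    ext n
    induction n with
    | zero =>
      rw [h, Qser_eq1 P G]
      simp [mul_assoc, coeff_C_mul, coeff_zero_X_mul]
    | succ n ih =>
      rw [h, Qser_eq1 P G]
      simp only [map_sub, mul_assoc, coeff_C_mul, coeff_succ_X_mul, ih]
  · -- left identity
    have e1 : E * (P * G) = G + S * G := by
      rw [← mul_assoc, h1, add_mul, one_mul]
    have key : PowerSeries.C E * Qser P G =
        PowerSeries.C (1 + S) - PowerSeries.C (G + S * G) * PowerSeries.X * Qser P G := by
      conv_lhs => rw [Qser_eq1 P G]
      rw [mul_sub, ← map_mul, h1, ← mul_assoc, ← mul_assoc, ← map_mul, e1]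
    rw [add_mul, key]
    simp only [map_add, map_mul, map_one]
    noncomm_ring
  · -- right identity
    have e2 : G * P * E = G + G * S' := by
      rw [mul_assoc, h2, mul_add, mul_one]
    have key : Qser P G * PowerSeries.C E =
        PowerSeries.C (1 + S') - Qser P G * PowerSeries.C (G + G * S') * PowerSeries.X := by
      conv_lhs => rw [Qser_eq2 P G]
      rw [sub_mul, ← map_mul, h2, mul_assoc _ PowerSeries.X, hx, ← mul_assoc,
        mul_assoc (Qser P G), ← map_mul, e2]
    rw [mul_add, ← mul_assoc, key]
    rw [sub_mul 1, one_mul,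
      mul_assoc (Qser P G * PowerSeries.C G) PowerSeries.X (PowerSeries.C S'), hx S']
    simp only [map_add, map_mul, map_one]
    noncomm_ring
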